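/- For every n ∈ ℕ with n ≥ 1, there exist N = (9n² − 7n)/2, coefficients p¹, p² : Fin N → ℝ with p¹(i) ≥ 0 and p²(i) ≥ 0 for all i, weights w : Fin N → ℝ with w(i) ≥ 0, and a capacity b ≥ 0, such that the function f : ℝ → ℝ defined by f(q) = max { Σᵢ (p¹(i)·q + p²(i))·x(i) : x : Fin N → {0,1}, Σᵢ w(i)·x(i) ≤ b } has exactly 2ⁿ − 1 breakpoints in the open interval (−2ⁿ, 2ⁿ), where q₀ is called a breakpoint of f if there is no open interval containing q₀ on which f agrees with an affine function. -/

import Mathlib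

open Finset

namespace Stmt6Aux


lemma sum_two_pow (n : ℕ) : ∑ k ∈ range n, 2^k = 2^n - 1 := by
  induction n with
  | zero => simp
  | succ n ih =>
    rw [Finset.sum_range_succ, ih]
    have h1 : 1 ≤ 2^n := Nat.one_le_two_pow
    have h2 : 2^(n+1) = 2^n * 2 := pow_succ 2 n
    omega

lemma bits_sum : ∀ n m, m < 2^n → ∑ k ∈ range n, (m / 2^k % 2) * 2^k = m := by
  intro n
  induction n with
  | zero => intro m hm; interval_cases m; simp
  | succ n ih =>
    intro m hm
    rw [Finset.sum_range_succ']
    simp only [pow_zero, Nat.div_one, mul_one]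
    have h1 : ∀ k ∈ range n, m / 2^(k+1) % 2 * 2^(k+1) = (m / 2 / 2^k % 2 * 2^k) * 2 := by
      intro k _
      have : m / 2^(k+1) = m / 2 / 2^k := by
        rw [Nat.div_div_eq_div_mul, ← pow_succ']
      rw [this, pow_succ]
      ring
    rw [Finset.sum_congr rfl h1, ← Finset.sum_mul]
    have hlt : m / 2 < 2^n := by
      have : 2^(n+1) = 2^n * 2 := pow_succ 2 n
      omega
    rw [ih (m/2) hlt]
    omega

lemma sq_sum (f : ℕ → ℝ) (n : ℕ) :
    (∑ k ∈ range n, f k)^2 =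
      ∑ k ∈ range n, (f k)^2 + 2 * ∑ l ∈ range n, ∑ k ∈ range l, f k * f l := by
  induction n with
  | zero => simp
  | succ n ih =>
    rw [Finset.sum_range_succ, Finset.sum_range_succ (f := fun k => (f k)^2),
      Finset.sum_range_succ (f := fun l => ∑ k ∈ range l, f k * f l), add_sq, ih,
      ← Finset.sum_mul]
    ring

lemma digits_inj : ∀ (K : ℕ) (c d : ℕ → ℕ), (∀ e, c e < 6) → (∀ e, d e < 6) →
    (∑ e ∈ range K, c e * 6^e) = (∑ e ∈ range K, d e * 6^e) → ∀ e < K, c e = d e := by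
  intro K
  induction K with
  | zero => intro c d _ _ _ e he; omega
  | succ K ih =>
    intro c d hc hd h e he
    rw [Finset.sum_range_succ', Finset.sum_range_succ'] at h
    simp only [pow_zero, mul_one] at h
    have h1 : ∀ (g : ℕ → ℕ), ∑ e ∈ range K, g (e+1) * 6^(e+1)
        = 6 * ∑ e ∈ range K, g (e+1) * 6^e := by
      intro g
      rw [Finset.mul_sum]
      refine Finset.sum_congr rfl fun k _ => ?_
      rw [pow_succ]
      ring
    rw [h1 c, h1 d] at h
    have hc0 : c 0 < 6 := hc 0
    have hd0 : d 0 < 6 := hd 0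
    have heq0 : c 0 = d 0 ∧ (∑ e ∈ range K, c (e+1) * 6^e) = ∑ e ∈ range K, d (e+1) * 6^e := by
      omega
    rcases e with _ | e
    · exact heq0.1
    · exact ih (fun e => c (e+1)) (fun e => d (e+1)) (fun e => hc _) (fun e => hd _)
        heq0.2 e (by omega)



/-- slot indices: `e = k*n + l` with `k = e/n < l = e%n < n`. -/
def slots (n : ℕ) : Finset ℕ := (range (n^2)).filter (fun e => e / n < e % n)

noncomputable def tau (n : ℕ) : ℝ := ((4:ℝ)^n)⁻¹

noncomputable def de (n : ℕ) (e : ℕ) : ℝ := tau n * 2^(e/n + e%n)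

def wA (n : ℕ) (k : ℕ) : ℕ := ∑ e ∈ slots n, (if e/n = k ∨ e%n = k then 6^e else 0)

def itemW (n : ℕ) (j : ℕ) : ℕ :=
  if j < n then wA n j else
  if j - n ∈ slots n then 6^(j-n) else
  if j - n - n^2 ∈ slots n then 6^(j-n-n^2) else 0

noncomputable def P1 (n : ℕ) (j : ℕ) : ℝ := if j < n then tau n * 2^j else 0

noncomputable def P2 (n : ℕ) (j : ℕ) : ℝ :=
  if j < n then (wA n j : ℝ) + tau n * 4^j / 2 else
  if j - n ∈ slots n then (6:ℝ)^(j-n) else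
  if j - n - n^2 ∈ slots n then (6:ℝ)^(j-n-n^2) - de n (j-n-n^2) else 0

def bN (n : ℕ) : ℕ := ∑ e ∈ slots n, 2 * 6^e

def NN (n : ℕ) : ℕ := (9 * n^2 - 7*n)/2

lemma tau_pos (n : ℕ) : 0 < tau n := by
  unfold tau; positivity

lemma tau_le_one (n : ℕ) : tau n ≤ 1 := by
  unfold tau
  rw [inv_le_one_iff₀]
  right
  exact one_le_pow₀ (by norm_num)

lemma mem_slots {n e : ℕ} (h : e ∈ slots n) :
    e < n^2 ∧ e/n < e%n ∧ e%n < n ∧ e/n < n ∧ e/n + e%n ≤ e := by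
  rw [slots, Finset.mem_filter, Finset.mem_range] at h
  obtain ⟨h1, h2⟩ := h
  have hn : n ≠ 0 := by rintro rfl; simp at h1
  have h3 : e % n < n := Nat.mod_lt _ (Nat.pos_of_ne_zero hn)
  have h4 : e/n < n := lt_trans h2 h3
  have h5 : n * (e/n) + e % n = e := Nat.div_add_mod e n
  have h6 : e/n ≤ n * (e/n) := Nat.le_mul_of_pos_left _ (Nat.pos_of_ne_zero hn)
  exact ⟨h1, h2, h3, h4, by omega⟩

lemma not_mem_slots_zero (n : ℕ) : 0 ∉ slots n := by
  rw [slots, Finset.mem_filter]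
  simp

lemma not_mem_slots_ge {n e : ℕ} (h : n^2 ≤ e) : e ∉ slots n := by
  rw [slots, Finset.mem_filter, Finset.mem_range]
  omega

/-- reindex slot sums as double sums over pairs `k < l < n`. -/
lemma sum_slots {M : Type*} [AddCommMonoid M] (n : ℕ) (h : ℕ → ℕ → M) :
    ∑ e ∈ slots n, h (e/n) (e%n) = ∑ l ∈ range n, ∑ k ∈ range l, h k l := by
  rw [← Finset.sum_sigma (range n) (fun l => range l) (fun p => h p.2 p.1)]
  refine Finset.sum_nbij' (i := fun e => ⟨e % n, e / n⟩) (j := fun p => p.2 * n + p.1)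
    ?_ ?_ ?_ ?_ ?_
  · intro e he
    obtain ⟨h1, h2, h3, h4, _⟩ := mem_slots he
    simp only [Finset.mem_sigma, Finset.mem_range]
    exact ⟨h3, h2⟩
  · intro p hp
    simp only [Finset.mem_sigma, Finset.mem_range] at hp
    obtain ⟨hp1, hp2⟩ := hp
    have hn : 0 < n := by omega
    have hdiv : (p.2 * n + p.1) / n = p.2 := by
      rw [add_comm, Nat.add_mul_div_right _ _ hn, Nat.div_eq_of_lt hp1, zero_add]
    have hmod : (p.2 * n + p.1) % n = p.1 := by
      rw [add_comm, Nat.add_mul_mod_self_right, Nat.mod_eq_of_lt hp1]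
    rw [slots, Finset.mem_filter, Finset.mem_range]
    refine ⟨?_, ?_⟩
    · show p.2 * n + p.1 < n^2
      have hA : p.2 * n + p.1 < (p.2 + 1) * n := by nlinarith
      have h2 : (p.2 + 1) * n ≤ n * n := Nat.mul_le_mul_right _ (by omega)
      have h3 : n * n = n^2 := (sq n).symm
      omega
    · show (p.2 * n + p.1) / n < (p.2 * n + p.1) % n
      rw [hdiv, hmod]; exact hp2
  · intro e he
    obtain ⟨h1, h2, h3, h4, _⟩ := mem_slots he
    exact Nat.div_add_mod' e n
  · intro p hp
    simp only [Finset.mem_sigma, Finset.mem_range] at hp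
    obtain ⟨hp1, hp2⟩ := hp
    have hn : 0 < n := by omega
    have hdiv : (p.2 * n + p.1) / n = p.2 := by
      rw [add_comm, Nat.add_mul_div_right _ _ hn, Nat.div_eq_of_lt hp1, zero_add]
    have hmod : (p.2 * n + p.1) % n = p.1 := by
      rw [add_comm, Nat.add_mul_mod_self_right, Nat.mod_eq_of_lt hp1]
    ext <;> simp [hdiv, hmod]
  · intro e he
    rfl


lemma NN_ge (n : ℕ) (hn : 2 ≤ n) : n + 2*n^2 ≤ NN n := by
  have h2 : 2 ∣ 9 * n^2 - 7*n := by
    rcases Nat.even_or_odd n with ⟨a, rfl⟩ | ⟨a, rfl⟩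
    · have h : (a+a)^2 = 4*a^2 := by ring
      rw [h]
      omega
    · have h : (2*a+1)^2 = 4*a^2 + 4*a + 1 := by ring
      rw [h]
      omega
  obtain ⟨c, hc⟩ := h2
  have hsq : n^2 = n*n := sq n
  have h7 : 7*n ≤ 9*n^2 := by nlinarith
  have hNN : NN n = c := by
    rw [NN, hc]; omega
  rw [hNN]
  have h10 : 2*n ≤ n*n := Nat.mul_le_mul_right n hn
  omega

lemma NN_one : NN 1 = 1 := by decide

lemma slots_one : slots 1 = ∅ := by decide

lemma n_le_NN (n : ℕ) (hn : 1 ≤ n) : n ≤ NN n := by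
  rcases eq_or_lt_of_le hn with h | h
  · rw [← h]; decide
  · have := NN_ge n h; nlinarith

lemma decomp {M : Type*} [AddCommMonoid M] (n : ℕ) (hn : 1 ≤ n) (F : ℕ → M)
    (hjunk : ∀ j, n ≤ j → (j - n) ∉ slots n → (j - n - n^2) ∉ slots n → F j = 0) :
    ∑ j ∈ range (NN n), F j
      = ∑ k ∈ range n, F k + ∑ e ∈ slots n, F (n + e) + ∑ e ∈ slots n, F (n + n^2 + e) := by
  have key : ∀ m : ℕ, (∀ e, e < n^2 → e ∉ slots n → F (m + e) = 0) →
      ∑ e ∈ range (n^2), F (m + e) = ∑ e ∈ slots n, F (m + e) := by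
    intro m hv
    refine (Finset.sum_subset (Finset.filter_subset _ _) ?_).symm
    intro e he hns
    exact hv e (Finset.mem_range.mp he) (by simpa [slots] using hns)
  rcases eq_or_lt_of_le hn with h1 | h2
  · rw [← h1] at *
    rw [slots_one, NN_one]
    simp
  · have hle : n + 2*n^2 ≤ NN n := NN_ge n h2
    have A1 : ∑ j ∈ Finset.Ico 0 n, F j + ∑ j ∈ Finset.Ico n (n+n^2), F j
        = ∑ j ∈ Finset.Ico 0 (n+n^2), F j := Finset.sum_Ico_consecutive F (by omega) (by omega)
    have A2 : ∑ j ∈ Finset.Ico 0 (n+n^2), F j + ∑ j ∈ Finset.Ico (n+n^2) (n+2*n^2), F j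
        = ∑ j ∈ Finset.Ico 0 (n+2*n^2), F j := Finset.sum_Ico_consecutive F (by omega) (by omega)
    have A3 : ∑ j ∈ Finset.Ico 0 (n+2*n^2), F j + ∑ j ∈ Finset.Ico (n+2*n^2) (NN n), F j
        = ∑ j ∈ Finset.Ico 0 (NN n), F j := Finset.sum_Ico_consecutive F (by omega) hle
    have Z4 : ∑ j ∈ Finset.Ico (n+2*n^2) (NN n), F j = 0 := by
      refine Finset.sum_eq_zero fun j hj => ?_
      rw [Finset.mem_Ico] at hj
      refine hjunk j (by omega) (not_mem_slots_ge (by omega)) (not_mem_slots_ge (by omega))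
    have Z2 : ∑ j ∈ Finset.Ico n (n+n^2), F j = ∑ e ∈ slots n, F (n + e) := by
      rw [Finset.sum_Ico_eq_sum_range]
      have h : n + n^2 - n = n^2 := by omega
      rw [h]
      refine key n fun e he hne => ?_
      refine hjunk (n+e) (by omega) (by simpa using hne) ?_
      have h0 : n + e - n - n^2 = 0 := by omega
      rw [h0]
      exact not_mem_slots_zero n
    have Z3 : ∑ j ∈ Finset.Ico (n+n^2) (n+2*n^2), F j = ∑ e ∈ slots n, F (n + n^2 + e) := by
      rw [Finset.sum_Ico_eq_sum_range]
      have h : n + 2*n^2 - (n+n^2) = n^2 := by omega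
      rw [h]
      have hshift : ∀ e ∈ range (n^2), F (n + n^2 + e) = F (n + n^2 + e) := fun _ _ => rfl
      refine key (n + n^2) fun e he hne => ?_
      have he' : n + n^2 + e - n - n^2 = e := by omega
      refine hjunk (n+n^2+e) (by omega) (not_mem_slots_ge (by omega)) (by rw [he']; exact hne)
    rw [Finset.range_eq_Ico, ← A3, ← A2, ← A1, Z4, Z2, Z3]
    have h0 : Finset.Ico 0 n = range n := by rw [Finset.range_eq_Ico]
    rw [h0, add_zero]

lemma wA_swap (n : ℕ) (y : ℕ → ℕ) :
    ∑ k ∈ range n, wA n k * y k = ∑ e ∈ slots n, (y (e/n) + y (e%n)) * 6^e := by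
  unfold wA
  simp only [Finset.sum_mul]
  rw [Finset.sum_comm]
  refine Finset.sum_congr rfl fun e he => ?_
  obtain ⟨h1, h2, h3, h4, _⟩ := mem_slots he
  have hne : e/n ≠ e%n := Nat.ne_of_lt h2
  have hsplit : ∀ k ∈ range n, (if e/n = k ∨ e%n = k then 6^e else 0) * y k
      = (if e/n = k then 6^e * y k else 0) + (if e%n = k then 6^e * y k else 0) := by
    intro k _
    by_cases hk1 : e/n = k <;> by_cases hk2 : e%n = k
    · exact absurd (hk1.trans hk2.symm) hne
    all_goals simp [hk1, hk2]
  rw [Finset.sum_congr rfl hsplit, Finset.sum_add_distrib, Finset.sum_ite_eq, Finset.sum_ite_eq]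
  rw [if_pos (Finset.mem_range.mpr h4), if_pos (Finset.mem_range.mpr h3)]
  ring

lemma itemW_A {n k : ℕ} (hk : k < n) : itemW n k = wA n k := by
  rw [itemW, if_pos hk]

lemma itemW_F {n e : ℕ} (he : e ∈ slots n) : itemW n (n+e) = 6^e := by
  rw [itemW, if_neg (by omega)]
  have h1 : n + e - n = e := by omega
  rw [h1, if_pos he]

lemma itemW_D {n e : ℕ} (he : e ∈ slots n) : itemW n (n+n^2+e) = 6^e := by
  have hlt := (mem_slots he).1
  rw [itemW, if_neg (by omega)]
  have h1 : n + n^2 + e - n = n^2 + e := by omega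
  rw [h1, if_neg (not_mem_slots_ge (by omega))]
  have h2 : n^2 + e - n^2 = e := by omega
  rw [h2, if_pos he]

lemma itemW_junk {n j : ℕ} (h1 : n ≤ j) (h2 : j - n ∉ slots n) (h3 : j - n - n^2 ∉ slots n) :
    itemW n j = 0 := by
  rw [itemW, if_neg (by omega), if_neg h2, if_neg h3]

lemma P1_A {n k : ℕ} (hk : k < n) : P1 n k = tau n * 2^k := by
  rw [P1, if_pos hk]

lemma P1_junk {n j : ℕ} (h1 : n ≤ j) : P1 n j = 0 := by
  rw [P1, if_neg (by omega)]

lemma P2_A {n k : ℕ} (hk : k < n) : P2 n k = (wA n k : ℝ) + tau n * 4^k / 2 := by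
  rw [P2, if_pos hk]

lemma P2_F {n e : ℕ} (he : e ∈ slots n) : P2 n (n+e) = (6:ℝ)^e := by
  rw [P2, if_neg (by omega)]
  have h1 : n + e - n = e := by omega
  rw [h1, if_pos he]

lemma P2_D {n e : ℕ} (he : e ∈ slots n) : P2 n (n+n^2+e) = (6:ℝ)^e - de n e := by
  have hlt := (mem_slots he).1
  rw [P2, if_neg (by omega)]
  have h1 : n + n^2 + e - n = n^2 + e := by omega
  rw [h1, if_neg (not_mem_slots_ge (by omega))]
  have h2 : n^2 + e - n^2 = e := by omega
  rw [h2, if_pos he]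

lemma P2_junk {n j : ℕ} (h1 : n ≤ j) (h2 : j - n ∉ slots n) (h3 : j - n - n^2 ∉ slots n) :
    P2 n j = 0 := by
  rw [P2, if_neg (by omega), if_neg h2, if_neg h3]

lemma wsum_eq (n : ℕ) (hn : 1 ≤ n) (y : ℕ → ℕ) :
    ∑ j ∈ range (NN n), itemW n j * y j
      = ∑ e ∈ slots n, (y (e/n) + y (e%n) + y (n+e) + y (n+n^2+e)) * 6^e := by
  rw [decomp n hn (fun j => itemW n j * y j)
    (fun j hj1 hj2 hj3 => by show itemW n j * y j = 0; rw [itemW_junk hj1 hj2 hj3, zero_mul])]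
  have hA : ∑ k ∈ range n, itemW n k * y k = ∑ k ∈ range n, wA n k * y k :=
    Finset.sum_congr rfl fun k hk => by rw [itemW_A (Finset.mem_range.mp hk)]
  have hF : ∑ e ∈ slots n, itemW n (n+e) * y (n+e) = ∑ e ∈ slots n, 6^e * y (n+e) :=
    Finset.sum_congr rfl fun e he => by rw [itemW_F he]
  have hD : ∑ e ∈ slots n, itemW n (n+n^2+e) * y (n+n^2+e)
      = ∑ e ∈ slots n, 6^e * y (n+n^2+e) :=
    Finset.sum_congr rfl fun e he => by rw [itemW_D he]
  rw [hA, hF, hD, wA_swap, ← Finset.sum_add_distrib, ← Finset.sum_add_distrib]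
  refine Finset.sum_congr rfl fun e he => ?_
  ring

lemma value_eq (n : ℕ) (hn : 1 ≤ n) (q : ℝ) (y : ℕ → ℕ) :
    ∑ j ∈ range (NN n), (P1 n j * q + P2 n j) * (y j : ℝ)
      = (∑ j ∈ range (NN n), itemW n j * y j : ℕ)
        + tau n * (∑ k ∈ range n, (y k : ℝ) * 2^k) * q
        + (tau n/2) * (∑ k ∈ range n, (y k : ℝ) * 4^k)
        - ∑ e ∈ slots n, (y (n+n^2+e) : ℝ) * de n e := by
  have hw : ((∑ j ∈ range (NN n), itemW n j * y j : ℕ) : ℝ)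
      = ∑ k ∈ range n, (wA n k : ℝ) * (y k : ℝ)
        + ∑ e ∈ slots n, (6:ℝ)^e * (y (n+e) : ℝ)
        + ∑ e ∈ slots n, (6:ℝ)^e * (y (n+n^2+e) : ℝ) := by
    rw [decomp n hn (fun j => itemW n j * y j)
      (fun j hj1 hj2 hj3 => by show itemW n j * y j = 0; rw [itemW_junk hj1 hj2 hj3, zero_mul])]
    push_cast
    have hA : ∑ k ∈ range n, (itemW n k : ℝ) * (y k : ℝ)
        = ∑ k ∈ range n, (wA n k : ℝ) * (y k : ℝ) :=
      Finset.sum_congr rfl fun k hk => by rw [itemW_A (Finset.mem_range.mp hk)]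
    have hF : ∑ e ∈ slots n, (itemW n (n+e) : ℝ) * (y (n+e) : ℝ)
        = ∑ e ∈ slots n, (6:ℝ)^e * (y (n+e) : ℝ) :=
      Finset.sum_congr rfl fun e he => by rw [itemW_F he]; push_cast; ring
    have hD : ∑ e ∈ slots n, (itemW n (n+n^2+e) : ℝ) * (y (n+n^2+e) : ℝ)
        = ∑ e ∈ slots n, (6:ℝ)^e * (y (n+n^2+e) : ℝ) :=
      Finset.sum_congr rfl fun e he => by rw [itemW_D he]; push_cast; ring
    rw [hA, hF, hD]
  rw [decomp n hn (fun j => (P1 n j * q + P2 n j) * (y j : ℝ))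
    (fun j hj1 hj2 hj3 => by
      show (P1 n j * q + P2 n j) * (y j : ℝ) = 0
      rw [P1_junk hj1, P2_junk hj1 hj2 hj3]
      ring)]
  have ZA : ∑ k ∈ range n, (P1 n k * q + P2 n k) * (y k : ℝ)
      = tau n * (∑ k ∈ range n, (y k : ℝ) * 2^k) * q
        + ∑ k ∈ range n, (wA n k : ℝ) * (y k : ℝ)
        + (tau n/2) * (∑ k ∈ range n, (y k : ℝ) * 4^k) := by
    rw [Finset.mul_sum, Finset.sum_mul, Finset.mul_sum, ← Finset.sum_add_distrib,
      ← Finset.sum_add_distrib]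
    refine Finset.sum_congr rfl fun k hk => ?_
    rw [P1_A (Finset.mem_range.mp hk), P2_A (Finset.mem_range.mp hk)]
    ring
  have ZF : ∑ e ∈ slots n, (P1 n (n+e) * q + P2 n (n+e)) * (y (n+e) : ℝ)
      = ∑ e ∈ slots n, (6:ℝ)^e * (y (n+e) : ℝ) := by
    refine Finset.sum_congr rfl fun e he => ?_
    rw [P1_junk (by omega), P2_F he]
    ring
  have ZD : ∑ e ∈ slots n, (P1 n (n+n^2+e) * q + P2 n (n+n^2+e)) * (y (n+n^2+e) : ℝ)
      = ∑ e ∈ slots n, (6:ℝ)^e * (y (n+n^2+e) : ℝ)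
        - ∑ e ∈ slots n, (y (n+n^2+e) : ℝ) * de n e := by
    rw [← Finset.sum_sub_distrib]
    refine Finset.sum_congr rfl fun e he => ?_
    rw [P1_junk (by omega), P2_D he]
    ring
  rw [ZA, ZF, ZD, hw]
  ring

lemma de_nonneg (n e : ℕ) : 0 ≤ de n e := by
  rw [de]
  have := tau_pos n
  positivity

lemma sum_de_lt_one (n : ℕ) : ∑ e ∈ slots n, de n e < 1 := by
  have h1 : ∑ e ∈ slots n, de n e = ∑ l ∈ range n, ∑ k ∈ range l, tau n * ((2:ℝ)^k * 2^l) := by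
    rw [← sum_slots n (fun k l => tau n * ((2:ℝ)^k * 2^l))]
    exact Finset.sum_congr rfl fun e he => by rw [de, pow_add]
  have htau := tau_pos n
  have h2 : ∑ l ∈ range n, ∑ k ∈ range l, tau n * ((2:ℝ)^k * 2^l)
      ≤ ∑ l ∈ range n, tau n * 4^l := by
    refine Finset.sum_le_sum fun l hl => ?_
    have hin : ∑ k ∈ range l, tau n * ((2:ℝ)^k * 2^l)
        = tau n * 2^l * ∑ k ∈ range l, (2:ℝ)^k := by
      rw [Finset.mul_sum]
      exact Finset.sum_congr rfl fun k hk => by ring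
    rw [hin, geom_sum_eq (by norm_num)]
    have h4 : (4:ℝ)^l = 2^l * 2^l := by
      rw [← mul_pow]; norm_num
    have h2l : (1:ℝ) ≤ 2^l := one_le_pow₀ (by norm_num)
    rw [h4]
    have : ((2:ℝ)^l - 1)/(2-1) ≤ 2^l := by norm_num
    nlinarith [pow_pos (show (0:ℝ) < 2 by norm_num) l]
  have h3 : ∑ l ∈ range n, tau n * (4:ℝ)^l = tau n * ((4^n - 1)/3) := by
    rw [← Finset.mul_sum, geom_sum_eq (by norm_num)]
    norm_num
  have h4 : (0:ℝ) < 4^n := by positivity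
  have h5 : tau n * ((4^n - 1)/3) < 1 := by
    rw [tau]
    rw [inv_mul_lt_iff₀ h4]
    nlinarith
  linarith [h1, h2, h3]

lemma arith (n : ℕ) (hn : 1 ≤ n) (y : ℕ → ℕ) (hy : ∀ k, y k ≤ 1) :
    (tau n/2) * (∑ k ∈ range n, (y k : ℝ) * 4^k)
      - ∑ e ∈ slots n, (if y (e/n) = 0 ∧ y (e%n) = 0 then de n e else 0)
    = tau n * (((4:ℝ)^n - 1)/6
        - ((2:ℝ)^n - 1 - ∑ k ∈ range n, (y k : ℝ) * 2^k)^2/2) := by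
  set g : ℕ → ℝ := fun k => (1 - (y k:ℝ)) * 2^k with hg
  have hybin : ∀ k, y k = 0 ∨ y k = 1 := fun k => by have := hy k; omega
  have e1 : ∑ e ∈ slots n, (if y (e/n) = 0 ∧ y (e%n) = 0 then de n e else 0)
      = ∑ e ∈ slots n, tau n * (g (e/n) * g (e%n)) := by
    refine Finset.sum_congr rfl fun e he => ?_
    rcases hybin (e/n) with h1 | h1 <;> rcases hybin (e%n) with h2 | h2 <;>
      simp [hg, h1, h2, de, pow_add] <;> ring
  have e2 : ∑ e ∈ slots n, tau n * (g (e/n) * g (e%n))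
      = tau n * ∑ l ∈ range n, ∑ k ∈ range l, g k * g l := by
    rw [sum_slots n (fun k l => tau n * (g k * g l)), Finset.mul_sum]
    exact Finset.sum_congr rfl fun l hl => (Finset.mul_sum _ _ _).symm
  have e3 : ∑ l ∈ range n, ∑ k ∈ range l, g k * g l
      = ((∑ k ∈ range n, g k)^2 - ∑ k ∈ range n, (g k)^2)/2 := by
    have := sq_sum g n
    linarith
  have e4 : ∑ k ∈ range n, g k = ((2:ℝ)^n - 1) - ∑ k ∈ range n, (y k : ℝ) * 2^k := by
    have : ∀ k ∈ range n, g k = (2:ℝ)^k - (y k : ℝ) * 2^k := fun k _ => by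
      simp [hg]; ring
    rw [Finset.sum_congr rfl this, Finset.sum_sub_distrib, geom_sum_eq (by norm_num)]
    norm_num
  have e5 : ∑ k ∈ range n, (g k)^2
      = ((4:ℝ)^n - 1)/3 - ∑ k ∈ range n, (y k : ℝ) * 4^k := by
    have h44 : ∀ k, ((2:ℝ)^k)^2 = 4^k := fun k => by
      rw [← pow_mul, mul_comm, pow_mul]; norm_num
    have : ∀ k ∈ range n, (g k)^2 = (4:ℝ)^k - (y k : ℝ) * 4^k := fun k _ => by
      rcases hybin k with h | h <;> simp [hg, h] <;> rw [← h44 k] <;> ring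
    rw [Finset.sum_congr rfl this, Finset.sum_sub_distrib, geom_sum_eq (by norm_num)]
    norm_num
  rw [e1, e2, e3, e4, e5]
  ring

noncomputable def Ifun (n : ℕ) (m : ℕ) : ℝ :=
  (bN n : ℝ) + tau n * (((4:ℝ)^n - 1)/6 - ((2:ℝ)^n - 1 - (m:ℝ))^2/2)

noncomputable def L (n : ℕ) (m : ℕ) (q : ℝ) : ℝ := tau n * m * q + Ifun n m

lemma mN_lt (n : ℕ) (y : ℕ → ℕ) (hy : ∀ j, y j ≤ 1) :
    ∑ k ∈ range n, y k * 2^k < 2^n := by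
  have h1 : ∑ k ∈ range n, y k * 2^k ≤ ∑ k ∈ range n, 2^k :=
    Finset.sum_le_sum fun k _ => by
      have := hy k
      have h2 : y k * 2^k ≤ 1 * 2^k := Nat.mul_le_mul_right _ (hy k)
      omega
  rw [sum_two_pow] at h1
  have := Nat.one_le_two_pow (n := n)
  omega

lemma feas_dichotomy (n : ℕ) (hn : 1 ≤ n) (y : ℕ → ℕ) (hy : ∀ j, y j ≤ 1)
    (hfeas : ∑ j ∈ range (NN n), itemW n j * y j ≤ bN n) :
    (∀ e ∈ slots n, y (e/n) + y (e%n) + y (n+e) + y (n+n^2+e) = 2) ∨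
    ∑ j ∈ range (NN n), itemW n j * y j + 1 ≤ bN n := by
  rcases Nat.eq_or_lt_of_le hfeas with he | hlt
  · left
    have h1 : ∑ e ∈ slots n, (y (e/n)+y (e%n)+y (n+e)+y (n+n^2+e)) * 6^e
        = ∑ e ∈ slots n, 2 * 6^e := by
      rw [← wsum_eq n hn y, he, bN]
    have hconv : ∀ c : ℕ → ℕ, ∑ e ∈ slots n, c e * 6^e
        = ∑ e ∈ range (n^2), (if e/n < e%n then c e else 0) * 6^e := by
      intro c
      rw [slots, Finset.sum_filter]
      exact Finset.sum_congr rfl fun e _ => by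
        by_cases h : e/n < e%n <;> simp [h]
    rw [hconv (fun e => y (e/n)+y (e%n)+y (n+e)+y (n+n^2+e)), hconv (fun _ => 2)] at h1
    intro e he
    have hlt2 := (mem_slots he).1
    have hcond := (mem_slots he).2.1
    have := digits_inj (n^2)
      (fun e => if e/n < e%n then y (e/n)+y (e%n)+y (n+e)+y (n+n^2+e) else 0)
      (fun e => if e/n < e%n then 2 else 0)
      (fun e => by have h1 := hy (e/n); have h2 := hy (e%n); have h3 := hy (n+e);
                   have h4 := hy (n+n^2+e); split <;> omega)
      (fun e => by split <;> omega) h1 e hlt2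
    simpa [hcond] using this
  · right; omega

lemma key_ub (n : ℕ) (hn : 1 ≤ n) (q : ℝ) (y : ℕ → ℕ) (hy : ∀ j, y j ≤ 1)
    (hfeas : ∑ j ∈ range (NN n), itemW n j * y j ≤ bN n) :
    ∑ j ∈ range (NN n), (P1 n j * q + P2 n j) * (y j : ℝ)
      ≤ L n (∑ k ∈ range n, y k * 2^k) q := by
  rw [value_eq n hn q y]
  have hcast : ((∑ k ∈ range n, y k * 2^k : ℕ) : ℝ) = ∑ k ∈ range n, (y k:ℝ) * 2^k := by
    push_cast; rfl
  have harith := arith n hn y hy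
  set SD := ∑ e ∈ slots n, (if y (e/n) = 0 ∧ y (e%n) = 0 then de n e else 0) with hSD
  have hLq : L n (∑ k ∈ range n, y k * 2^k) q
      = tau n * (∑ k ∈ range n, (y k:ℝ) * 2^k) * q + (bN n : ℝ)
        + ((tau n/2) * (∑ k ∈ range n, (y k : ℝ) * 4^k) - SD) := by
    rw [L, Ifun, hcast, ← harith]
    ring
  rw [hLq]
  rcases feas_dichotomy n hn y hy hfeas with hfull | hless
  · have hw : (∑ j ∈ range (NN n), itemW n j * y j) = bN n := by
      rw [wsum_eq n hn y, bN]
      exact Finset.sum_congr rfl fun e he => by rw [hfull e he]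
    rw [hw]
    have hvd : SD ≤ ∑ e ∈ slots n, (y (n+n^2+e) : ℝ) * de n e := by
      rw [hSD]
      refine Finset.sum_le_sum fun e he => ?_
      by_cases hz : y (e/n) = 0 ∧ y (e%n) = 0
      · rw [if_pos hz]
        obtain ⟨hz1, hz2⟩ := hz
        have h2 := hfull e he
        rw [hz1, hz2] at h2
        have hu := hy (n+e)
        have hu2 := hy (n+n^2+e)
        have hv : y (n+n^2+e) = 1 := by omega
        rw [hv]
        simp
      · rw [if_neg hz]
        exact mul_nonneg (Nat.cast_nonneg _) (de_nonneg n e)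
    linarith
  · have hcast2 : ((∑ j ∈ range (NN n), itemW n j * y j : ℕ):ℝ) ≤ (bN n : ℝ) - 1 := by
      have h := (Nat.cast_le (α := ℝ)).mpr hless
      rw [Nat.cast_add, Nat.cast_one] at h
      linarith
    have hSD1 : SD ≤ 1 := by
      have h1 : SD ≤ ∑ e ∈ slots n, de n e := by
        rw [hSD]
        refine Finset.sum_le_sum fun e he => ?_
        by_cases hz : y (e/n) = 0 ∧ y (e%n) = 0
        · rw [if_pos hz]
        · rw [if_neg hz]; exact de_nonneg n e
      linarith [sum_de_lt_one n]
    have hvd0 : 0 ≤ ∑ e ∈ slots n, (y (n+n^2+e) : ℝ) * de n e :=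
      Finset.sum_nonneg fun e he => mul_nonneg (Nat.cast_nonneg _) (de_nonneg n e)
    linarith

lemma key_wit (n : ℕ) (hn : 1 ≤ n) (m : ℕ) (hm : m < 2^n) (q : ℝ) :
    ∃ y : ℕ → ℕ, (∀ j, y j ≤ 1)
      ∧ (∑ j ∈ range (NN n), itemW n j * y j) = bN n
      ∧ ∑ j ∈ range (NN n), (P1 n j * q + P2 n j) * (y j : ℝ) = L n m q := by
  classical
  set sb : ℕ → ℕ := fun e => m / 2^(e/n) % 2 + m / 2^(e%n) % 2 with hsb
  set y : ℕ → ℕ := fun j => if j < n then m / 2^j % 2 else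
      if j - n ∈ slots n then (if sb (j-n) ≤ 1 then 1 else 0) else
      if j - n - n^2 ∈ slots n then (if sb (j-n-n^2) = 0 then 1 else 0) else 0 with hy'
  have hbit : ∀ j, m / 2^j % 2 ≤ 1 := fun j => by
    have h := Nat.mod_lt (m / 2^j) (show 0 < 2 by norm_num)
    omega
  have hy : ∀ j, y j ≤ 1 := fun j => by
    rw [hy']
    dsimp only
    split
    · exact hbit j
    · split
      · split <;> omega
      · split
        · split <;> omega
        · omega
  have hyA : ∀ k, k < n → y k = m / 2^k % 2 := fun k hk => by
    rw [hy']; dsimp only; rw [if_pos hk]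
  have hyF : ∀ e, e ∈ slots n → y (n+e) = (if sb e ≤ 1 then 1 else 0) := fun e he => by
    have h1 : n + e - n = e := by omega
    rw [hy']; dsimp only; rw [if_neg (by omega), h1, if_pos he]
  have hyD : ∀ e, e ∈ slots n → y (n+n^2+e) = (if sb e = 0 then 1 else 0) := fun e he => by
    have hlt := (mem_slots he).1
    have h1 : n + n^2 + e - n = n^2 + e := by omega
    have h2 : n^2 + e - n^2 = e := by omega
    rw [hy']; dsimp only
    rw [if_neg (by omega), h1, if_neg (not_mem_slots_ge (by omega)), h2, if_pos he]
  have hsig : ∀ e, e ∈ slots n → y (e/n) + y (e%n) = sb e := fun e he => by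
    obtain ⟨_, _, h3, h4, _⟩ := mem_slots he
    rw [hyA _ h4, hyA _ h3, hsb]
  have hfull : ∀ e ∈ slots n, y (e/n) + y (e%n) + y (n+e) + y (n+n^2+e) = 2 := by
    intro e he
    rw [hsig e he, hyF e he, hyD e he]
    have hb1 := hbit (e/n)
    have hb2 := hbit (e%n)
    have hsb2 : sb e ≤ 2 := by
      show m / 2^(e/n) % 2 + m / 2^(e%n) % 2 ≤ 2
      omega
    rcases Nat.lt_or_ge (sb e) 1 with h | h
    · rw [if_pos (by omega), if_pos (by omega)]; omega
    · rcases Nat.eq_or_lt_of_le h with h1 | h1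
      · rw [if_pos (by omega), if_neg (by omega)]; omega
      · rw [if_neg (by omega), if_neg (by omega)]; omega
  have hwsum : (∑ j ∈ range (NN n), itemW n j * y j) = bN n := by
    rw [wsum_eq n hn y, bN]
    exact Finset.sum_congr rfl fun e he => by rw [hfull e he]
  refine ⟨y, hy, hwsum, ?_⟩
  rw [value_eq n hn q y, hwsum]
  have hm2 : ∑ k ∈ range n, y k * 2^k = m := by
    rw [← bits_sum n m hm]
    exact Finset.sum_congr rfl fun k hk => by rw [hyA k (Finset.mem_range.mp hk)]
  have hcast : (∑ k ∈ range n, (y k:ℝ) * 2^k) = (m:ℝ) := by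
    rw [← hm2]
    push_cast; rfl
  have hSDeq : ∑ e ∈ slots n, (y (n+n^2+e) : ℝ) * de n e
      = ∑ e ∈ slots n, (if y (e/n) = 0 ∧ y (e%n) = 0 then de n e else 0) := by
    refine Finset.sum_congr rfl fun e he => ?_
    rw [hyD e he]
    have hs := hsig e he
    by_cases hz : y (e/n) = 0 ∧ y (e%n) = 0
    · rw [if_pos hz, if_pos (by omega)]; simp
    · rw [if_neg hz, if_neg (by omega)]; simp
  rw [hSDeq]
  have ha := arith n hn y hy
  rw [hcast] at ha
  rw [hcast, L, Ifun]
  linarith [ha]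

lemma P1_nonneg (n j : ℕ) : 0 ≤ P1 n j := by
  rw [P1]
  split
  · have := tau_pos n; positivity
  · exact le_refl 0

lemma de_le_pow {n e : ℕ} (he : e ∈ slots n) : de n e ≤ (6:ℝ)^e := by
  obtain ⟨_, _, _, _, h5⟩ := mem_slots he
  rw [de]
  have h1 : tau n * 2^(e/n + e%n) ≤ 1 * 2^(e/n + e%n) := by
    refine mul_le_mul_of_nonneg_right (tau_le_one n) (by positivity)
  have h2 : (2:ℝ)^(e/n + e%n) ≤ 2^e := by
    exact pow_le_pow_right₀ (by norm_num) h5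
  have h3 : (2:ℝ)^e ≤ 6^e := by
    exact pow_le_pow_left₀ (by norm_num) (by norm_num) e
  linarith

lemma P2_nonneg (n j : ℕ) : 0 ≤ P2 n j := by
  rw [P2]
  split
  · have := tau_pos n
    positivity
  · split
    · positivity
    · split
      · rename_i h1 h2 h3
        have := de_le_pow h3
        linarith
      · exact le_refl 0

lemma Lmono_left (n j m : ℕ) (hj : j < m) (q : ℝ)
    (hq : (m:ℝ) - 2^n + 1/2 ≤ q) : L n j q ≤ L n m q := by
  rw [L, L, Ifun, Ifun]
  have htau := tau_pos n
  have hjm : (j:ℝ) ≤ (m:ℝ) - 1 := by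
    have : (j:ℝ) + 1 ≤ (m:ℝ) := by exact_mod_cast hj
    linarith
  set X := (m:ℝ) with hX
  set J := (j:ℝ) with hJ
  set T := (2:ℝ)^n with hT
  have h3 : (0:ℝ) ≤ X - J := by linarith
  have h1 : (X - J) * (X - T + 1/2) ≤ (X - J) * q := by
    exact mul_le_mul_of_nonneg_left hq h3
  have h2 : (0:ℝ) ≤ X - J - 1 := by linarith
  have key : 0 ≤ (X - J) * q + ((T-1-J)^2 - (T-1-X)^2)/2 := by
    nlinarith [h1, mul_nonneg h3 h2]
  nlinarith [mul_nonneg htau.le key]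

lemma Lmono_right (n j m : ℕ) (hj : m < j) (q : ℝ)
    (hq : q ≤ ((m:ℝ) + 1) - 2^n + 1/2) : L n j q ≤ L n m q := by
  rw [L, L, Ifun, Ifun]
  have htau := tau_pos n
  have hjm : (m:ℝ) + 1 ≤ (j:ℝ) := by exact_mod_cast hj
  set X := (m:ℝ) with hX
  set J := (j:ℝ) with hJ
  set T := (2:ℝ)^n with hT
  have h3 : (0:ℝ) ≤ J - X := by linarith
  have h1 : (J - X) * (T - X - 3/2) ≤ (J - X) * (-q) := by
    refine mul_le_mul_of_nonneg_left (by linarith) h3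
  have h2 : (0:ℝ) ≤ J - X - 1 := by linarith
  have key : 0 ≤ (X - J) * q + ((T-1-J)^2 - (T-1-X)^2)/2 := by
    nlinarith [h1, mul_nonneg h3 h2]
  nlinarith [mul_nonneg htau.le key]

lemma Lcross (n m : ℕ) (h1 : 1 ≤ m) :
    L n (m-1) ((m:ℝ) - 2^n + 1/2) = L n m ((m:ℝ) - 2^n + 1/2) := by
  rw [L, L, Ifun, Ifun]
  have hc : ((m-1:ℕ):ℝ) = (m:ℝ) - 1 := by
    push_cast [h1]
    ring
  rw [hc]
  ring

end Stmt6Aux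

/-- The optimal value function of the parametric cost knapsack problem:
`f q` is the maximum of `∑ i (p1 i * q + p2 i) * x i` over binary vectors `x`
satisfying the weight constraint. Since the set of attained values is finite and
nonempty (`x = 0` is feasible), its supremum is its maximum. -/
noncomputable def paramKnapVal (N : ℕ) (p1 p2 w : Fin N → ℝ) (b : ℝ) (q : ℝ) : ℝ :=
  sSup {v : ℝ | ∃ x : Fin N → ℝ, (∀ i, x i = 0 ∨ x i = 1) ∧
    (∑ i, w i * x i) ≤ b ∧ v = ∑ i, (p1 i * q + p2 i) * x i}

/-- `q0` is a breakpoint of `f` if `f` agrees with no affine function on any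
open set containing `q0`. -/
def IsBreakpoint (f : ℝ → ℝ) (q0 : ℝ) : Prop :=
  ¬ ∃ a c : ℝ, ∃ s : Set ℝ, IsOpen s ∧ q0 ∈ s ∧ ∀ q ∈ s, f q = a * q + c

open Stmt6Aux Finset in
theorem stmt6 (n : ℕ) (hn : 1 ≤ n) :
    ∃ (p1 p2 w : Fin ((9 * n ^ 2 - 7 * n) / 2) → ℝ) (b : ℝ),
      (∀ i, 0 ≤ p1 i) ∧ (∀ i, 0 ≤ p2 i) ∧ (∀ i, 0 ≤ w i) ∧ 0 ≤ b ∧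
      {q : ℝ | q ∈ Set.Ioo (-(2 ^ n : ℝ)) (2 ^ n) ∧
        IsBreakpoint (paramKnapVal ((9 * n ^ 2 - 7 * n) / 2) p1 p2 w b) q}.ncard
        = 2 ^ n - 1 := by
  classical
  refine ⟨fun i => P1 n i.val, fun i => P2 n i.val, fun i => (itemW n i.val : ℝ),
    (bN n : ℝ), fun i => P1_nonneg n i.val, fun i => P2_nonneg n i.val,
    fun i => Nat.cast_nonneg _, Nat.cast_nonneg _, ?_⟩
  show {q : ℝ | q ∈ Set.Ioo (-(2 ^ n : ℝ)) (2 ^ n) ∧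
      IsBreakpoint (paramKnapVal (NN n) (fun i => P1 n i.val) (fun i => P2 n i.val)
        (fun i => (itemW n i.val : ℝ)) ((bN n : ℝ))) q}.ncard = 2 ^ n - 1
  set f := paramKnapVal (NN n) (fun i => P1 n i.val) (fun i => P2 n i.val)
    (fun i => (itemW n i.val : ℝ)) ((bN n : ℝ)) with hf
  have hM1 : 0 < 2^n := pow_pos (by norm_num) n
  have hM2 : 2 ≤ 2^n := by
    calc 2 = 2^1 := rfl
    _ ≤ 2^n := Nat.pow_le_pow_right (by norm_num) hn
  have hne : (range (2^n)).Nonempty := ⟨0, Finset.mem_range.mpr hM1⟩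
  set genv : ℝ → ℝ := fun q => (range (2^n)).sup' hne (fun m => L n m q) with hgenv
  -- upper bound for all feasible values
  have hub : ∀ q : ℝ, ∀ v ∈ {v : ℝ | ∃ x : Fin (NN n) → ℝ, (∀ i, x i = 0 ∨ x i = 1) ∧
      (∑ i, (itemW n i.val : ℝ) * x i) ≤ (bN n : ℝ) ∧
      v = ∑ i, (P1 n i.val * q + P2 n i.val) * x i}, v ≤ genv q := by
    rintro q v ⟨x, hxbin, hxfeas, rfl⟩
    set y : ℕ → ℕ := fun j => if h : j < NN n then (if x ⟨j, h⟩ = 1 then 1 else 0) else 0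
      with hy'
    have hxy : ∀ i : Fin (NN n), x i = (y i.val : ℝ) := by
      intro i
      rcases hxbin i with h | h <;> simp [hy', i.isLt, h]
    have hy1 : ∀ j, y j ≤ 1 := by
      intro j
      rw [hy']
      dsimp only
      split
      · split <;> omega
      · omega
    have hwtrans : (∑ i : Fin (NN n), (itemW n i.val : ℝ) * x i)
        = ((∑ j ∈ range (NN n), itemW n j * y j : ℕ) : ℝ) := by
      rw [Finset.sum_congr rfl (fun i _ => by rw [hxy i])]
      push_cast
      exact Fin.sum_univ_eq_sum_range (fun j => (itemW n j : ℝ) * (y j : ℝ)) (NN n)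
    have hfeasN : ∑ j ∈ range (NN n), itemW n j * y j ≤ bN n := by
      have h := hxfeas
      rw [hwtrans] at h
      exact_mod_cast h
    have hvtrans : (∑ i : Fin (NN n), (P1 n i.val * q + P2 n i.val) * x i)
        = ∑ j ∈ range (NN n), (P1 n j * q + P2 n j) * (y j : ℝ) := by
      rw [Finset.sum_congr rfl (fun i _ => by rw [hxy i])]
      exact Fin.sum_univ_eq_sum_range (fun j => (P1 n j * q + P2 n j) * (y j : ℝ)) (NN n)
    rw [hvtrans]
    calc ∑ j ∈ range (NN n), (P1 n j * q + P2 n j) * (y j : ℝ)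
        ≤ L n (∑ k ∈ range n, y k * 2^k) q := key_ub n hn q y hy1 hfeasN
      _ ≤ genv q := Finset.le_sup' (fun m => L n m q) (Finset.mem_range.mpr (mN_lt n y hy1))
  -- f equals the envelope
  have hfg : ∀ q, f q = genv q := by
    intro q
    have hrw : f q = sSup {v : ℝ | ∃ x : Fin (NN n) → ℝ, (∀ i, x i = 0 ∨ x i = 1) ∧
        (∑ i, (itemW n i.val : ℝ) * x i) ≤ (bN n : ℝ) ∧
        v = ∑ i, (P1 n i.val * q + P2 n i.val) * x i} := rfl
    rw [hrw]
    apply le_antisymm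
    · refine csSup_le ⟨0, fun _ => 0, fun i => Or.inl rfl, by simp, by simp⟩ (hub q)
    · obtain ⟨m0, hm0mem, hm0⟩ := Finset.exists_mem_eq_sup' hne (fun m => L n m q)
      obtain ⟨y, hy1, hwy, hvy⟩ := key_wit n hn m0 (Finset.mem_range.mp hm0mem) q
      have hvtrans : (∑ i : Fin (NN n), (P1 n i.val * q + P2 n i.val) * ((y i.val : ℕ) : ℝ))
          = ∑ j ∈ range (NN n), (P1 n j * q + P2 n j) * (y j : ℝ) :=
        Fin.sum_univ_eq_sum_range (fun j => (P1 n j * q + P2 n j) * (y j : ℝ)) (NN n)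
      refine le_csSup ⟨genv q, hub q⟩ ⟨fun i => (y i.val : ℝ), fun i => ?_, ?_, ?_⟩
      · rcases Nat.le_one_iff_eq_zero_or_eq_one.mp (hy1 i.val) with h | h
        · left; show ((y i.val : ℕ) : ℝ) = 0; rw [h]; norm_num
        · right; show ((y i.val : ℕ) : ℝ) = 1; rw [h]; norm_num
      · have hwtrans : (∑ i : Fin (NN n), (itemW n i.val : ℝ) * ((y i.val : ℕ) : ℝ))
            = ((∑ j ∈ range (NN n), itemW n j * y j : ℕ) : ℝ) := by
          push_cast
          exact Fin.sum_univ_eq_sum_range (fun j => (itemW n j : ℝ) * (y j : ℝ)) (NN n)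
        rw [hwtrans, hwy]
      · show genv q = _
        rw [hvtrans, hvy, hgenv]
        exact hm0
  -- the envelope is the correct line on each piece
  have henv : ∀ m : ℕ, m < 2^n → ∀ q : ℝ, (1 ≤ m → (m:ℝ) - 2^n + 1/2 ≤ q) →
      (m+1 < 2^n → q ≤ ((m:ℝ) + 1) - 2^n + 1/2) → genv q = L n m q := by
    intro m hm q h1 h2
    refine le_antisymm (Finset.sup'_le _ _ fun j hj => ?_)
      (Finset.le_sup' (fun m => L n m q) (Finset.mem_range.mpr hm))
    rw [Finset.mem_range] at hj
    rcases lt_trichotomy j m with hjm | rfl | hjm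
    · exact Lmono_left n j m hjm q (h1 (by omega))
    · exact le_refl _
    · exact Lmono_right n j m hjm q (h2 (by omega))
  -- each crossing point is a breakpoint
  have hbp : ∀ m : ℕ, 1 ≤ m → m < 2^n → IsBreakpoint f ((m:ℝ) - 2^n + 1/2) := by
    intro m h1 hm
    rintro ⟨a, c, s, hopen, hmem, haff⟩
    obtain ⟨ε, hε, hball⟩ := Metric.isOpen_iff.mp hopen _ hmem
    set q0 := (m:ℝ) - 2^n + 1/2 with hq0
    set η := min (ε/2) (1/2) with hη
    have hη0 : 0 < η := lt_min (by linarith) (by norm_num)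
    have hη1 : η ≤ 1/2 := min_le_right _ _
    have hηε : η < ε := lt_of_le_of_lt (min_le_left _ _) (by linarith)
    have hmem1 : q0 + η ∈ s := hball (by
      rw [Metric.mem_ball, Real.dist_eq, show q0 + η - q0 = η by ring, abs_of_pos hη0]
      exact hηε)
    have hmem2 : q0 - η ∈ s := hball (by
      rw [Metric.mem_ball, Real.dist_eq, show q0 - η - q0 = -η by ring, abs_neg,
        abs_of_pos hη0]
      exact hηε)
    have hc : ((m-1:ℕ):ℝ) = (m:ℝ) - 1 := by push_cast [h1]; ring
    have hv0 : f q0 = L n m q0 := by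
      rw [hfg]
      exact henv m hm q0 (fun _ => le_refl q0) (fun _ => by rw [hq0]; linarith)
    have hvp : f (q0 + η) = L n m (q0 + η) := by
      rw [hfg]
      exact henv m hm (q0 + η) (fun _ => by rw [hq0]; linarith)
        (fun _ => by rw [hq0]; linarith)
    have hvm : f (q0 - η) = L n (m-1) (q0 - η) := by
      rw [hfg]
      refine henv (m-1) (by omega) (q0 - η) (fun h => ?_) (fun h => ?_)
      · rw [hc, hq0]; linarith
      · rw [hc, hq0]; linarith
    have hlin : L n m (q0 + η) + L n (m-1) (q0 - η) - 2 * L n m q0 = tau n * η := by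
      simp only [L, Ifun, hc, hq0]
      ring
    have e1 := haff _ hmem1
    have e2 := haff _ hmem
    have e3 := haff _ hmem2
    rw [hvp] at e1
    rw [hv0] at e2
    rw [hvm] at e3
    have htau := tau_pos n
    have hpos := mul_pos htau hη0
    linarith [e1, e2, e3, hlin, hpos]
  -- all other points are not breakpoints
  have hstep : ∀ q : ℝ, q ∈ Set.Ioo (-(2^n:ℝ)) (2^n) →
      q ∉ (fun m : ℕ => (m:ℝ) - 2^n + 1/2) '' (Set.Ico 1 (2^n)) →
      ¬ IsBreakpoint f q := by
    intro q hq himg hbrk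
    apply hbrk
    rcases lt_or_ge q ((1:ℝ) - 2^n + 1/2) with hcase | hcase
    · refine ⟨tau n * ((0:ℕ):ℝ), Ifun n 0, Set.Iio ((1:ℝ) - 2^n + 1/2), isOpen_Iio,
        hcase, ?_⟩
      intro q' hq'
      rw [Set.mem_Iio] at hq'
      rw [hfg, henv 0 hM1 q' (fun h => absurd h (by omega)) (fun _ => by push_cast; linarith), L]
    · rcases lt_or_ge (((2^n - 1 : ℕ):ℝ) - 2^n + 1/2) q with hcase2 | hcase2
      · refine ⟨tau n * ((2^n - 1 : ℕ):ℝ), Ifun n (2^n - 1),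
          Set.Ioi (((2^n - 1 : ℕ):ℝ) - 2^n + 1/2), isOpen_Ioi, hcase2, ?_⟩
        intro q' hq'
        rw [Set.mem_Ioi] at hq'
        rw [hfg, henv (2^n - 1) (by omega) q' (fun _ => le_of_lt hq')
          (fun h => absurd h (by omega)), L]
      · set t := q + 2^n - 1/2 with ht
        set m := (⌊t⌋).toNat with hm'
        have ht1 : (1:ℝ) ≤ t := by rw [ht]; linarith
        have hfl1 : (1:ℤ) ≤ ⌊t⌋ := Int.le_floor.mpr (by exact_mod_cast ht1)
        have hmcast : (m:ℝ) = (⌊t⌋ : ℝ) := by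
          rw [hm']
          exact_mod_cast Int.toNat_of_nonneg (by omega)
        have hm1 : 1 ≤ m := by rw [hm']; omega
        have hqlb : (m:ℝ) - 2^n + 1/2 ≤ q := by
          have h := Int.floor_le t
          rw [hmcast]
          rw [ht] at h
          linarith
        have hqub' : q < ((m:ℝ) + 1) - 2^n + 1/2 := by
          have h := Int.lt_floor_add_one t
          rw [ht] at h
          rw [hmcast]
          linarith
        have hmub : m ≤ 2^n - 1 := by
          have h2 : (m:ℝ) ≤ ((2^n - 1 : ℕ):ℝ) := by
            have h := Int.floor_le t
            rw [ht] at h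
            rw [hmcast]
            linarith
          exact_mod_cast h2
        have hmlt : m < 2^n := by omega
        have hne2 : q ≠ (m:ℝ) - 2^n + 1/2 := by
          intro hcontra
          exact himg ⟨m, Set.mem_Ico.mpr ⟨hm1, hmlt⟩, hcontra.symm⟩
        have hqlb' : (m:ℝ) - 2^n + 1/2 < q := lt_of_le_of_ne hqlb (fun h => hne2 h.symm)
        have hm2 : m + 1 < 2^n := by
          have h3 : (m:ℝ) < ((2^n - 1:ℕ):ℝ) := by linarith
          have h4 : m < 2^n - 1 := by exact_mod_cast h3
          omega
        refine ⟨tau n * (m:ℝ), Ifun n m,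
          Set.Ioo ((m:ℝ) - 2^n + 1/2) (((m:ℝ)+1) - 2^n + 1/2),
          isOpen_Ioo, ⟨hqlb', hqub'⟩, ?_⟩
        intro q' hq'
        rw [hfg, henv m hmlt q' (fun _ => le_of_lt hq'.1) (fun _ => le_of_lt hq'.2), L]
  -- the breakpoint set
  have hsetEq : {q : ℝ | q ∈ Set.Ioo (-(2^n:ℝ)) (2^n) ∧ IsBreakpoint f q}
      = (fun m : ℕ => (m:ℝ) - 2^n + 1/2) '' (Set.Ico 1 (2^n)) := by
    apply Set.eq_of_subset_of_subset
    · rintro q ⟨hq1, hq2⟩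
      by_contra himg
      exact hstep q hq1 himg hq2
    · rintro q ⟨m, hm, rfl⟩
      rw [Set.mem_Ico] at hm
      refine ⟨⟨?_, ?_⟩, hbp m hm.1 hm.2⟩
      · have h0 : (0:ℝ) ≤ (m:ℝ) := Nat.cast_nonneg m
        have hTpos : (0:ℝ) < 2^n := by positivity
        linarith
      · have h2 : (m:ℝ) + 1 ≤ (2:ℝ)^n := by exact_mod_cast Nat.succ_le_of_lt hm.2
        linarith
  rw [hsetEq, Set.ncard_image_of_injOn (fun a _ b _ hab => by
    have hcast : (a:ℝ) = (b:ℝ) := by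
      have h := hab
      linarith
    exact_mod_cast hcast)]
  rw [← Finset.coe_Ico, Set.ncard_coe_finset, Nat.card_Ico]
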